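/- Let π be a probability density on R^n × R^m with conditional density π(x|y), and let ρ be an everywhere-positive differentiable reference density on R^n. Let w_θ : R^n × R^m → R^n be differentiable in x. Assume: (i) π(x|y) is differentiable in x; (ii) E_π[‖w_θ(x,y)‖²] < ∞; (iii) E_π[‖∇_x log(π(x|y)/ρ(x))‖²] < ∞; (iv) for every y, π(x|y) w_θ(x,y) → 0 as ‖x‖ → ∞; and (v) all integrals appearing below are finite. Then (1/2) E_π[‖w_θ(x,y) − ∇_x log(π(x|y)/ρ(x))‖²] = E_π[ (1/2) w_θ(x,y)ᵀ w_θ(x,y) + tr(∇_x w_θ(x,y)) + ∇_x log ρ(x)ᵀ w_θ(x,y) ] + C, where C = (1/2) E_π[‖∇_x log(π(x|y)/ρ(x))‖²] depends only on π and ρ. -/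

import Mathlib

open MeasureTheory Matrix Filter

/-- Partial derivative of `f : ℝⁿ → ℝ` in the `i`-th coordinate at `x`. -/
noncomputable def pd {n : ℕ} (f : (Fin n → ℝ) → ℝ) (i : Fin n) (x : Fin n → ℝ) : ℝ :=
  deriv (fun t => f (Function.update x i t)) (x i)

section SRMAux
open Set

lemma hasDerivAt_pd {n : ℕ} {f : (Fin n → ℝ) → ℝ} {D : (Fin n → ℝ) →L[ℝ] ℝ}
    {x : Fin n → ℝ} (h : HasFDerivAt f D x) (i : Fin n) :
    HasDerivAt (fun t => f (Function.update x i t)) (D (Pi.single i 1)) (x i) := by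
  have hu := hasDerivAt_update x i (x i)
  have h' : HasFDerivAt f D (Function.update x i (x i)) := by
    rwa [Function.update_eq_self]
  have := h'.comp_hasDerivAt (x i) hu
  exact this

lemma pd_eq {n : ℕ} {f : (Fin n → ℝ) → ℝ} {D : (Fin n → ℝ) →L[ℝ] ℝ}
    {x : Fin n → ℝ} (h : HasFDerivAt f D x) (i : Fin n) :
    pd f i x = D (Pi.single i 1) := (hasDerivAt_pd h i).deriv

section LemA
variable {k : ℕ}

/-- key vanishing of the integral of a divergence -/
lemma integral_div_zero (p : (Fin (k+1) → ℝ) → ℝ) (v : (Fin (k+1) → ℝ) → (Fin (k+1) → ℝ))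
    (hp : Differentiable ℝ p) (hp0 : ∀ x, 0 ≤ p x) (hv : Differentiable ℝ v)
    (hpint : Integrable p)
    (hpv2 : Integrable (fun x => p x * ∑ i, v x i ^ 2))
    (hdiv : Integrable (fun x => ∑ i, (p x * pd (fun x => v x i) i x + pd p i x * v x i))) :
    ∫ x, ∑ i, (p x * pd (fun x => v x i) i x + pd p i x * v x i) = 0 := by
  classical
  set f : (Fin (k+1) → ℝ) → (Fin (k+1) → ℝ) := fun x => p x • v x with hf
  set f' : (Fin (k+1) → ℝ) → (Fin (k+1) → ℝ) →L[ℝ] (Fin (k+1) → ℝ) :=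
    fun x => p x • fderiv ℝ v x + (fderiv ℝ p x).smulRight (v x) with hf'def
  have hf' : ∀ x, HasFDerivAt f (f' x) x := fun x =>
    ((hp x).hasFDerivAt.smul (hv x).hasFDerivAt)
  have hdiv_eq : ∀ x, (∑ i, (p x * pd (fun x => v x i) i x + pd p i x * v x i))
      = ∑ i, f' x (Pi.single i 1) i := by
    intro x
    refine Finset.sum_congr rfl fun i _ => ?_
    have h1 : pd p i x = fderiv ℝ p x (Pi.single i 1) := pd_eq (hp x).hasFDerivAt i
    have h2 : pd (fun x => v x i) i x = fderiv ℝ v x (Pi.single i 1) i := by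
      have hc : HasFDerivAt (fun x => v x i)
          ((ContinuousLinearMap.proj i).comp (fderiv ℝ v x)) x :=
        hasFDerivAt_pi'.1 (hv x).hasFDerivAt i
      simpa using pd_eq hc i
    simp [hf'def, h1, h2, mul_comm]
  simp_rw [hdiv_eq] at hdiv ⊢
  -- the dominating function
  set q : (Fin (k+1) → ℝ) → ℝ := fun x => p x + p x * ∑ i, v x i ^ 2 with hqdef
  have hq_int : Integrable q := hpint.add hpv2
  have hq0 : ∀ x, 0 ≤ q x := fun x =>
    add_nonneg (hp0 x) (mul_nonneg (hp0 x) (Finset.sum_nonneg fun i _ => sq_nonneg _))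
  have hv_cont : ∀ i, Continuous fun x => v x i := fun i =>
    (continuous_apply i).comp hv.continuous
  have hq_cont : Continuous q :=
    hp.continuous.add (hp.continuous.mul
      (continuous_finset_sum _ fun i _ => (hv_cont i).pow 2))
  have hfq : ∀ x i, |f x i| ≤ q x := by
    intro x i
    have h1 : |f x i| = p x * |v x i| := by
      simp [hf, abs_mul, abs_of_nonneg (hp0 x)]
    have h2 : |v x i| ≤ 1 + v x i ^ 2 := by nlinarith [sq_nonneg (|v x i| - 1), abs_nonneg (v x i), sq_abs (v x i)]
    have h3 : p x * |v x i| ≤ p x * (1 + v x i ^ 2) := mul_le_mul_of_nonneg_left h2 (hp0 x)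
    have h4 : v x i ^ 2 ≤ ∑ j, v x j ^ 2 :=
      Finset.single_le_sum (f := fun j => v x j ^ 2) (fun j _ => sq_nonneg _) (Finset.mem_univ i)
    calc |f x i| ≤ p x * (1 + v x i ^ 2) := h1 ▸ h3
      _ = p x + p x * v x i ^ 2 := by ring
      _ ≤ q x := by
          simp only [hqdef]
          have := mul_le_mul_of_nonneg_left h4 (hp0 x)
          linarith
  -- slice integrals of q
  set Q : Fin (k+1) → ℝ → ℝ := fun i t => ∫ z : Fin k → ℝ, q (i.insertNth t z) with hQdef
  have hq_prod : ∀ i : Fin (k+1),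
      Integrable (fun tz : ℝ × (Fin k → ℝ) => q (i.insertNth tz.1 tz.2))
        (volume.prod volume) := by
    intro i
    have mp := (MeasureTheory.volume_preserving_piFinSuccAbove (fun _ : Fin (k+1) => ℝ) i)
    have mps := mp.symm
    have hemb := (MeasurableEquiv.piFinSuccAbove (fun _ : Fin (k+1) => ℝ) i).symm.measurableEmbedding
    have h := (mps.integrable_comp_emb hemb).2 hq_int
    rw [← Measure.volume_eq_prod]
    convert h using 2 with tz
    rfl
  have hQ_int : ∀ i, Integrable (Q i) := fun i => (hq_prod i).integral_prod_left
  have hQ_slice : ∀ i : Fin (k+1), ∀ᵐ t : ℝ,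
      Integrable (fun z : Fin k → ℝ => q (i.insertNth t z)) := fun i =>
    (hq_prod i).prod_right_ae
  set H : ℝ → ℝ := fun t => ∑ i, Q i t with hHdef
  have hH_int : Integrable H := integrable_finset_sum _ fun i _ => hQ_int i
  have hQ0 : ∀ i t, 0 ≤ Q i t := fun i t => integral_nonneg fun z => hq0 _
  have hH0 : ∀ t, 0 ≤ H t := fun t => Finset.sum_nonneg fun i _ => hQ0 i t
  set div : (Fin (k+1) → ℝ) → ℝ := fun x => ∑ i, f' x (Pi.single i 1) i with hdivdef
  have hf_cont : Continuous f := hp.continuous.smul hv.continuous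
  have key : ∀ ε > (0:ℝ), |∫ x, div x| ≤ ε := by
    intro ε hε
    -- Step A : tail estimate for |div|
    set B : ℕ → Set (Fin (k+1) → ℝ) :=
      fun j => Icc (fun _ => -(j:ℝ)) (fun _ => (j:ℝ)) with hBdef
    have hBmeas : ∀ j, MeasurableSet (B j) := fun j => measurableSet_Icc
    have hBmono : Monotone B := by
      intro a b hab
      apply Icc_subset_Icc
      · intro i; simp only; exact neg_le_neg (by exact_mod_cast hab)
      · intro i; simp only; exact_mod_cast hab
    have hBunion : (⋃ j, B j) = univ := by
      ext x
      simp only [mem_iUnion, mem_univ, iff_true]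
      obtain ⟨j, hj⟩ := exists_nat_ge ‖x‖
      refine ⟨j, ⟨fun i => ?_, fun i => ?_⟩⟩
      · have h := (abs_le.1 ((norm_le_pi_norm x i).trans hj)).1
        simpa using h
      · exact (abs_le.1 ((norm_le_pi_norm x i).trans hj)).2
    have htail := tendsto_setIntegral_of_monotone hBmeas hBmono
      (by rw [hBunion]; exact hdiv.abs.integrableOn : IntegrableOn (fun x => |div x|) (⋃ j, B j))
    rw [hBunion, setIntegral_univ] at htail
    rw [Metric.tendsto_atTop] at htail
    obtain ⟨N, hN⟩ := htail (ε/2) (by positivity)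
    have hN' := hN N le_rfl
    rw [Real.dist_eq] at hN'
    have hBNle : ∫ x in B N, |div x| ≤ ∫ x, |div x| :=
      setIntegral_le_integral hdiv.abs (ae_of_all _ fun x => abs_nonneg _)
    have htail' : ∫ x in (B N)ᶜ, |div x| < ε/2 := by
      have hic : (∫ x in B N, |div x|) + ∫ x in (B N)ᶜ, |div x| = ∫ x, |div x| :=
        integral_add_compl (hBmeas N) hdiv.abs
      have h2 := (abs_sub_lt_iff.1 hN').2
      linarith
    -- Step B : choose good radii R' ≤ -N ≤ N ≤ R
    have hMar := hH_int.measure_ge_lt_top (show (0:ℝ) < ε/4 by positivity)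
    have hGood : ∀ᵐ t : ℝ, ∀ i : Fin (k+1),
        Integrable (fun z : Fin k → ℝ => q (i.insertNth t z)) := ae_all_iff.2 hQ_slice
    have hpick : ∀ s : Set ℝ, volume s = ⊤ →
        ∃ t, t ∈ s ∧ H t < ε/4 ∧ ∀ i : Fin (k+1),
          Integrable (fun z : Fin k → ℝ => q (i.insertNth t z)) := by
      intro s hs
      by_contra hc
      push_neg at hc
      have hsub : s ⊆ {t | ε/4 ≤ H t} ∪
          {t | ¬ ∀ i : Fin (k+1), Integrable (fun z : Fin k → ℝ => q (i.insertNth t z))} := by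
        intro t ht
        by_cases h1 : H t < ε/4
        · by_cases h2 : ∀ i : Fin (k+1), Integrable (fun z : Fin k → ℝ => q (i.insertNth t z))
          · obtain ⟨i0, hi0⟩ := hc t ht h1
            exact (hi0 (h2 i0)).elim
          · exact Or.inr h2
        · exact Or.inl (not_lt.1 h1)
      have hle := (measure_mono (μ := (volume : Measure ℝ)) hsub).trans (measure_union_le _ _)
      rw [hs] at hle
      have h0 : volume {t : ℝ | ¬ ∀ i : Fin (k+1),
          Integrable (fun z : Fin k → ℝ => q (i.insertNth t z))} = 0 := ae_iff.1 hGood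
      rw [h0, add_zero] at hle
      exact absurd (lt_of_le_of_lt hle hMar) (lt_irrefl _)
    obtain ⟨R, hRmem, hHR, hRgood⟩ := hpick (Ici (N:ℝ)) Real.volume_Ici
    obtain ⟨R', hR'mem, hHR', hR'good⟩ := hpick (Iic (-(N:ℝ))) Real.volume_Iic
    have hRge : (N:ℝ) ≤ R := hRmem
    have hR'le : R' ≤ -(N:ℝ) := hR'mem
    have hN0 : (0:ℝ) ≤ N := Nat.cast_nonneg N
    -- Step C : divergence theorem on the box [R', R]^(k+1)
    set a : Fin (k+1) → ℝ := fun _ => R' with hadef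
    set b : Fin (k+1) → ℝ := fun _ => R with hbdef
    have hab : a ≤ b := fun i => by
      simp only [hadef, hbdef]; linarith
    have hDT := MeasureTheory.integral_divergence_of_hasFDerivAt_off_countable a b hab f f'
      ∅ countable_empty hf_cont.continuousOn (fun x _ => hf' x) hdiv.integrableOn
    -- face bound
    have hface : ∀ (i : Fin (k+1)) (t : ℝ),
        Integrable (fun z : Fin k → ℝ => q (i.insertNth t z)) →
        |∫ z in Icc (a ∘ i.succAbove) (b ∘ i.succAbove), f (i.insertNth t z) i| ≤ Q i t := by
      intro i t hqt
      have hcont : Continuous fun z : Fin k → ℝ => f (i.insertNth t z) i :=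
        (continuous_apply i).comp (hf_cont.comp (continuous_const.finInsertNth i continuous_id))
      have hfi : IntegrableOn (fun z => f (i.insertNth t z) i)
          (Icc (a ∘ i.succAbove) (b ∘ i.succAbove)) := by
        refine Integrable.mono' hqt.integrableOn hcont.aestronglyMeasurable.restrict
          (ae_of_all _ fun z => ?_)
        rw [Real.norm_eq_abs]
        exact hfq _ i
      calc |∫ z in Icc (a ∘ i.succAbove) (b ∘ i.succAbove), f (i.insertNth t z) i|
          ≤ ∫ z in Icc (a ∘ i.succAbove) (b ∘ i.succAbove), |f (i.insertNth t z) i| := by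
            simpa [Real.norm_eq_abs] using
              norm_integral_le_integral_norm (μ := volume.restrict _)
                (f := fun z : Fin k → ℝ => f (i.insertNth t z) i)
        _ ≤ ∫ z in Icc (a ∘ i.succAbove) (b ∘ i.succAbove), q (i.insertNth t z) := by
            refine setIntegral_mono_on hfi.abs hqt.integrableOn measurableSet_Icc
              fun z _ => hfq _ i
        _ ≤ Q i t := setIntegral_le_integral hqt (ae_of_all _ fun z => hq0 _)
    have hbox : |∫ x in Icc a b, div x| ≤ ε/2 := by
      simp only [hdivdef]
      rw [hDT]
      have h1 : ∀ i : Fin (k+1),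
          |(∫ z in Icc (a ∘ i.succAbove) (b ∘ i.succAbove), f (i.insertNth (b i) z) i)
            - ∫ z in Icc (a ∘ i.succAbove) (b ∘ i.succAbove), f (i.insertNth (a i) z) i|
            ≤ Q i R + Q i R' := by
        intro i
        refine (abs_sub _ _).trans (add_le_add ?_ ?_)
        · exact hface i R (hRgood i)
        · exact hface i R' (hR'good i)
      calc |∑ i : Fin (k+1), ((∫ z in Icc (a ∘ i.succAbove) (b ∘ i.succAbove),
              f (i.insertNth (b i) z) i)
            - ∫ z in Icc (a ∘ i.succAbove) (b ∘ i.succAbove), f (i.insertNth (a i) z) i)|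
          ≤ ∑ i : Fin (k+1), |(∫ z in Icc (a ∘ i.succAbove) (b ∘ i.succAbove),
              f (i.insertNth (b i) z) i)
            - ∫ z in Icc (a ∘ i.succAbove) (b ∘ i.succAbove), f (i.insertNth (a i) z) i| :=
            Finset.abs_sum_le_sum_abs _ _
        _ ≤ ∑ i : Fin (k+1), (Q i R + Q i R') := Finset.sum_le_sum fun i _ => h1 i
        _ = H R + H R' := by rw [hHdef]; rw [Finset.sum_add_distrib]
        _ ≤ ε/2 := by linarith
    -- Step D : combine
    have hsubBN : B N ⊆ Icc a b := by
      apply Icc_subset_Icc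
      · intro i; simp only [hadef, hBdef]; linarith
      · intro i; simp only [hbdef, hBdef]; linarith
    have hcompl : |∫ x in (Icc a b)ᶜ, div x| ≤ ε/2 := by
      have h1 : |∫ x in (Icc a b)ᶜ, div x| ≤ ∫ x in (Icc a b)ᶜ, |div x| := by
        simpa [Real.norm_eq_abs] using
          norm_integral_le_integral_norm (μ := volume.restrict (Icc a b)ᶜ) (f := div)
      have h2 : ∫ x in (Icc a b)ᶜ, |div x| ≤ ∫ x in (B N)ᶜ, |div x| :=
        setIntegral_mono_set hdiv.abs.integrableOn
          (ae_of_all _ fun x => abs_nonneg _)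
          (HasSubset.Subset.eventuallyLE (compl_subset_compl.2 hsubBN))
      linarith
    have hsplit := integral_add_compl (measurableSet_Icc (a := a) (b := b)) hdiv
    calc |∫ x, div x| = |(∫ x in Icc a b, div x) + ∫ x in (Icc a b)ᶜ, div x| := by
          rw [hsplit]
      _ ≤ |∫ x in Icc a b, div x| + |∫ x in (Icc a b)ᶜ, div x| := abs_add_le _ _
      _ ≤ ε := by linarith
  have h0 : |∫ x, div x| ≤ 0 := le_of_forall_pos_le_add (by intro ε hε; simpa using key ε hε)
  have := (abs_nonneg _).antisymm h0
  exact abs_eq_zero.1 this.symm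
end LemA

section LemB
variable {k : ℕ}

lemma slice_zero (p : (Fin (k+1) → ℝ) → ℝ) (ρ : (Fin (k+1) → ℝ) → ℝ)
    (v u : (Fin (k+1) → ℝ) → (Fin (k+1) → ℝ))
    (hp : Differentiable ℝ p) (hp0 : ∀ x, 0 ≤ p x)
    (hρ_pos : ∀ x, 0 < ρ x) (hρ_diff : Differentiable ℝ ρ)
    (hu : ∀ x i, u x i = pd (fun x' => Real.log (p x' / ρ x')) i x)
    (hv : ∀ i, Differentiable ℝ (fun x => v x i))
    (hpint : Integrable p)
    (hpv2 : Integrable (fun x => p x * ∑ i, v x i ^ 2))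
    (hG : Integrable (fun x => p x * (∑ i, v x i * u x i
      + ∑ i, pd (fun x => v x i) i x
      + ∑ i, pd (fun x => Real.log (ρ x)) i x * v x i))) :
    ∫ x, p x * (∑ i, v x i * u x i
      + ∑ i, pd (fun x => v x i) i x
      + ∑ i, pd (fun x => Real.log (ρ x)) i x * v x i) = 0 := by
  classical
  have hkey : ∀ x i, pd p i x
      = p x * u x i + p x * pd (fun x => Real.log (ρ x)) i x := by
    intro x i
    rcases eq_or_lt_of_le (hp0 x) with hpx | hpx
    · -- p x = 0 : both sides vanish
      have hmin : IsLocalMin p x := by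
        refine Filter.Eventually.of_forall fun y => ?_
        rw [← hpx]; exact hp0 y
      have hD0 : fderiv ℝ p x = 0 := hmin.fderiv_eq_zero
      have : pd p i x = fderiv ℝ p x (Pi.single i 1) := pd_eq (hp x).hasFDerivAt i
      rw [this, hD0, ← hpx]
      simp
    · -- p x > 0
      have hρx := hρ_pos x
      have hDp : HasDerivAt (fun t => p (Function.update x i t))
          (fderiv ℝ p x (Pi.single i 1)) (x i) := hasDerivAt_pd (hp x).hasFDerivAt i
      have hDρ : HasDerivAt (fun t => ρ (Function.update x i t))
          (fderiv ℝ ρ x (Pi.single i 1)) (x i) := hasDerivAt_pd (hρ_diff x).hasFDerivAt i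
      set Dp := fderiv ℝ p x (Pi.single i 1)
      set Dρ := fderiv ℝ ρ x (Pi.single i 1)
      have hpu : p (Function.update x i (x i)) = p x := by rw [Function.update_eq_self]
      have hρu : ρ (Function.update x i (x i)) = ρ x := by rw [Function.update_eq_self]
      have hdivD : HasDerivAt (fun t => p (Function.update x i t) / ρ (Function.update x i t))
          ((Dp * ρ x - p x * Dρ) / ρ x ^ 2) (x i) := by
        have := hDp.div hDρ (by rw [hρu]; exact hρx.ne')
        rwa [hpu, hρu] at this
      have hlogD : HasDerivAt (fun t => Real.log (p (Function.update x i t)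
          / ρ (Function.update x i t)))
          (((Dp * ρ x - p x * Dρ) / ρ x ^ 2) / (p x / ρ x)) (x i) := by
        have := hdivD.log (by rw [hpu, hρu]; positivity)
        rwa [hpu, hρu] at this
      have hlogρD : HasDerivAt (fun t => Real.log (ρ (Function.update x i t)))
          (Dρ / ρ x) (x i) := by
        have := hDρ.log (by rw [hρu]; exact hρx.ne')
        rwa [hρu] at this
      have hui : u x i = ((Dp * ρ x - p x * Dρ) / ρ x ^ 2) / (p x / ρ x) := by
        rw [hu x i]; exact hlogD.deriv
      have hlogρ : pd (fun x => Real.log (ρ x)) i x = Dρ / ρ x := hlogρD.deriv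
      have hpd : pd p i x = Dp := pd_eq (hp x).hasFDerivAt i
      rw [hui, hlogρ, hpd]
      field_simp
      ring
  have hptwise : ∀ x, p x * (∑ i, v x i * u x i
      + ∑ i, pd (fun x => v x i) i x
      + ∑ i, pd (fun x => Real.log (ρ x)) i x * v x i)
      = ∑ i, (p x * pd (fun x => v x i) i x + pd p i x * v x i) := by
    intro x
    simp only [mul_add, Finset.mul_sum]
    rw [← Finset.sum_add_distrib, ← Finset.sum_add_distrib]
    exact Finset.sum_congr rfl fun i _ => by rw [hkey x i]; ring
  have hfun : (fun x => p x * (∑ i, v x i * u x i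
      + ∑ i, pd (fun x => v x i) i x
      + ∑ i, pd (fun x => Real.log (ρ x)) i x * v x i))
      = fun x => ∑ i, (p x * pd (fun x => v x i) i x + pd p i x * v x i) :=
    funext hptwise
  rw [hfun] at hG ⊢
  exact integral_div_zero p v hp hp0 (differentiable_pi.2 hv) hpint hpv2 hG
end LemB
end SRMAux

/-- **Score ratio matching objective (Theorem 1).**
Given a joint density `π` on ℝⁿ × ℝᵐ with conditional `πc(x|y) = π(x,y)/π_Y(y)`,
an everywhere-positive differentiable reference density `ρ` on ℝⁿ, and a score
network `wθ` differentiable in `x`, under the stated integrability and decay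
assumptions the (weighted) L² score-ratio matching objective equals the implicit
objective plus a constant `C = ½ E_π ‖∇ₓ log(πc/ρ)‖²` independent of `wθ`. -/
theorem score_ratio_matching_objective {n m : ℕ}
    (π : (Fin n → ℝ) → (Fin m → ℝ) → ℝ)
    (πY : (Fin m → ℝ) → ℝ) (πc : (Fin n → ℝ) → (Fin m → ℝ) → ℝ)
    (ρ : (Fin n → ℝ) → ℝ)
    (wθ w : (Fin n → ℝ) → (Fin m → ℝ) → Fin n → ℝ)
    -- π is a probability density on ℝⁿ × ℝᵐ with marginal πY and conditional πc
    (hπ_nonneg : ∀ x y, 0 ≤ π x y)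
    (hπ_one : ∫ z : (Fin n → ℝ) × (Fin m → ℝ), π z.1 z.2 = 1)
    (hπY : ∀ y, πY y = ∫ x, π x y)
    (hπc : ∀ x y, πc x y = π x y / πY y)
    -- ρ is an everywhere-positive differentiable density on ℝⁿ
    (hρ_pos : ∀ x, 0 < ρ x)
    (hρ_diff : Differentiable ℝ ρ)
    (hρ_one : ∫ x, ρ x = 1)
    -- w is the score ratio ∇ₓ log(πc(x|y)/ρ(x))
    (hw : ∀ x y i, w x y i = pd (fun x' => Real.log (πc x' y / ρ x')) i x)
    -- wθ is differentiable in x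
    (hwθ_diff : ∀ y, Differentiable ℝ (fun x => wθ x y))
    -- (i) πc(x|y) is differentiable in x
    (hπc_diff : ∀ y, Differentiable ℝ (fun x => πc x y))
    -- (ii) E_π ‖wθ‖² < ∞
    (hwθ_L2 : Integrable (fun z : (Fin n → ℝ) × (Fin m → ℝ) =>
      π z.1 z.2 * ∑ i, (wθ z.1 z.2 i) ^ 2))
    -- (iii) E_π ‖∇ₓ log(πc/ρ)‖² < ∞
    (hw_L2 : Integrable (fun z : (Fin n → ℝ) × (Fin m → ℝ) =>
      π z.1 z.2 * ∑ i, (w z.1 z.2 i) ^ 2))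
    -- (iv) πc(x|y) wθ(x,y) → 0 as ‖x‖ → ∞, for every y
    (hdecay : ∀ y, Tendsto (fun x => πc x y • wθ x y) (cocompact (Fin n → ℝ)) (nhds 0))
    -- (v) integrability of the remaining integrands below
    (hdiff_int : Integrable (fun z : (Fin n → ℝ) × (Fin m → ℝ) =>
      π z.1 z.2 * ∑ i, (wθ z.1 z.2 i - w z.1 z.2 i) ^ 2))
    (hobj_int : Integrable (fun z : (Fin n → ℝ) × (Fin m → ℝ) =>
      π z.1 z.2 * ((1 / 2) * ∑ i, (wθ z.1 z.2 i) ^ 2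
        + (∑ i, pd (fun x => wθ x z.2 i) i z.1)
        + ∑ i, pd (fun x => Real.log (ρ x)) i z.1 * wθ z.1 z.2 i))) :
    (1 / 2) * ∫ z : (Fin n → ℝ) × (Fin m → ℝ),
        π z.1 z.2 * ∑ i, (wθ z.1 z.2 i - w z.1 z.2 i) ^ 2
      = (∫ z : (Fin n → ℝ) × (Fin m → ℝ),
          π z.1 z.2 * ((1 / 2) * ∑ i, (wθ z.1 z.2 i) ^ 2
            + (∑ i, pd (fun x => wθ x z.2 i) i z.1)
            + ∑ i, pd (fun x => Real.log (ρ x)) i z.1 * wθ z.1 z.2 i))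
        + (1 / 2) * ∫ z : (Fin n → ℝ) × (Fin m → ℝ),
            π z.1 z.2 * ∑ i, (w z.1 z.2 i) ^ 2 := by
  rcases n with _ | k
  · simp
  · -- main case : n = k + 1
    have hπ_int : Integrable (fun z : (Fin (k+1) → ℝ) × (Fin m → ℝ) => π z.1 z.2) := by
      by_contra h
      rw [MeasureTheory.integral_undef h] at hπ_one
      exact one_ne_zero hπ_one.symm
    have hsq : ∀ (a b : Fin (k+1) → ℝ), ∑ i, (a i - b i) ^ 2
        = ((∑ i, a i ^ 2) - 2 * ∑ i, a i * b i) + ∑ i, b i ^ 2 := by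
      intro a b
      rw [Finset.mul_sum, ← Finset.sum_sub_distrib, ← Finset.sum_add_distrib]
      exact Finset.sum_congr rfl fun i _ => by ring
    have hcross : Integrable (fun z : (Fin (k+1) → ℝ) × (Fin m → ℝ) =>
        π z.1 z.2 * ∑ i, wθ z.1 z.2 i * w z.1 z.2 i) := by
      have h1 : (fun z : (Fin (k+1) → ℝ) × (Fin m → ℝ) =>
          π z.1 z.2 * ∑ i, wθ z.1 z.2 i * w z.1 z.2 i)
          = fun z => (1/2) * ((π z.1 z.2 * ∑ i, (wθ z.1 z.2 i) ^ 2
              + π z.1 z.2 * ∑ i, (w z.1 z.2 i) ^ 2)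
              - π z.1 z.2 * ∑ i, (wθ z.1 z.2 i - w z.1 z.2 i) ^ 2) := by
        funext z
        rw [hsq (wθ z.1 z.2) (w z.1 z.2)]
        ring
      rw [h1]
      exact ((hwθ_L2.add hw_L2).sub hdiff_int).const_mul _
    have himp : Integrable (fun z : (Fin (k+1) → ℝ) × (Fin m → ℝ) =>
        π z.1 z.2 * ((∑ i, pd (fun x => wθ x z.2 i) i z.1)
          + ∑ i, pd (fun x => Real.log (ρ x)) i z.1 * wθ z.1 z.2 i)) := by
      have h1 : (fun z : (Fin (k+1) → ℝ) × (Fin m → ℝ) =>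
          π z.1 z.2 * ((∑ i, pd (fun x => wθ x z.2 i) i z.1)
            + ∑ i, pd (fun x => Real.log (ρ x)) i z.1 * wθ z.1 z.2 i))
          = fun z => (π z.1 z.2 * ((1 / 2) * ∑ i, (wθ z.1 z.2 i) ^ 2
              + (∑ i, pd (fun x => wθ x z.2 i) i z.1)
              + ∑ i, pd (fun x => Real.log (ρ x)) i z.1 * wθ z.1 z.2 i))
              - (1/2) * (π z.1 z.2 * ∑ i, (wθ z.1 z.2 i) ^ 2) := by
        funext z; ring
      rw [h1]
      exact hobj_int.sub (hwθ_L2.const_mul _)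
    have hG_int : Integrable (fun z : (Fin (k+1) → ℝ) × (Fin m → ℝ) =>
        π z.1 z.2 * (∑ i, wθ z.1 z.2 i * w z.1 z.2 i
          + ∑ i, pd (fun x => wθ x z.2 i) i z.1
          + ∑ i, pd (fun x => Real.log (ρ x)) i z.1 * wθ z.1 z.2 i)) := by
      have h1 : (fun z : (Fin (k+1) → ℝ) × (Fin m → ℝ) =>
          π z.1 z.2 * (∑ i, wθ z.1 z.2 i * w z.1 z.2 i
            + ∑ i, pd (fun x => wθ x z.2 i) i z.1
            + ∑ i, pd (fun x => Real.log (ρ x)) i z.1 * wθ z.1 z.2 i))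
          = fun z => (π z.1 z.2 * ∑ i, wθ z.1 z.2 i * w z.1 z.2 i)
              + π z.1 z.2 * ((∑ i, pd (fun x => wθ x z.2 i) i z.1)
                + ∑ i, pd (fun x => Real.log (ρ x)) i z.1 * wθ z.1 z.2 i) := by
        funext z; ring
      rw [h1]
      exact hcross.add himp
    -- the key vanishing integral
    have hkey : ∫ z : (Fin (k+1) → ℝ) × (Fin m → ℝ),
        π z.1 z.2 * (∑ i, wθ z.1 z.2 i * w z.1 z.2 i
          + ∑ i, pd (fun x => wθ x z.2 i) i z.1
          + ∑ i, pd (fun x => Real.log (ρ x)) i z.1 * wθ z.1 z.2 i) = 0 := by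
      have hG_int' := hG_int
      have hπ_int' := hπ_int
      have hwθ_L2' := hwθ_L2
      have hw_L2' := hw_L2
      rw [Measure.volume_eq_prod] at hG_int' hπ_int' hwθ_L2' hw_L2'
      rw [Measure.volume_eq_prod, integral_prod_symm _ hG_int']
      refine integral_eq_zero_of_ae ?_
      filter_upwards [hπ_int'.prod_left_ae, hwθ_L2'.prod_left_ae, hG_int'.prod_left_ae]
        with y h1 h2 h3
      by_cases hy : πY y = 0
      · have h0 : ∫ x, π x y = 0 := by rw [← hπY y, hy]
        have hzero : (fun x : Fin (k+1) → ℝ => π x y) =ᵐ[volume] 0 :=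
          (integral_eq_zero_iff_of_nonneg (fun x => hπ_nonneg x y) h1).1 h0
        refine integral_eq_zero_of_ae ?_
        filter_upwards [hzero] with x hx
        simp only [Pi.zero_apply] at hx
        simp [hx]
      · have hπY_nonneg : 0 ≤ πY y := by
          rw [hπY y]; exact integral_nonneg fun x => hπ_nonneg x y
        have hπYpos : 0 < πY y := lt_of_le_of_ne hπY_nonneg (Ne.symm hy)
        have hpint' : Integrable (fun x => πc x y) :=
          (h1.div_const (πY y)).congr (Filter.EventuallyEq.of_eq
            (funext fun x => (hπc x y).symm))
        have hpv2' : Integrable (fun x => πc x y * ∑ i, wθ x y i ^ 2) :=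
          (h2.div_const (πY y)).congr (Filter.EventuallyEq.of_eq
            (funext fun x => by rw [hπc x y]; ring))
        have hGslice' : Integrable (fun x => πc x y * (∑ i, wθ x y i * w x y i
            + ∑ i, pd (fun x => wθ x y i) i x
            + ∑ i, pd (fun x => Real.log (ρ x)) i x * wθ x y i)) :=
          (h3.div_const (πY y)).congr (Filter.EventuallyEq.of_eq
            (funext fun x => by rw [hπc x y]; ring))
        have h0 := slice_zero (fun x => πc x y) ρ (fun x => wθ x y) (fun x => w x y)
          (hπc_diff y)
          (fun x => by
            show (0:ℝ) ≤ πc x y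
            rw [hπc x y]; exact div_nonneg (hπ_nonneg x y) hπY_nonneg)
          hρ_pos hρ_diff
          (fun x i => hw x y i)
          (fun i => differentiable_pi.1 (hwθ_diff y) i)
          hpint' hpv2' hGslice'
        have hfact : (fun x : Fin (k+1) → ℝ => π x y * (∑ i, wθ x y i * w x y i
            + ∑ i, pd (fun x => wθ x y i) i x
            + ∑ i, pd (fun x => Real.log (ρ x)) i x * wθ x y i))
            = fun x => πY y * (πc x y * (∑ i, wθ x y i * w x y i
              + ∑ i, pd (fun x => wθ x y i) i x
              + ∑ i, pd (fun x => Real.log (ρ x)) i x * wθ x y i)) := by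
          funext x
          rw [hπc x y]
          field_simp
        rw [hfact, integral_const_mul, h0, mul_zero]
        simp
    -- final algebra
    have e1 : ∫ z : (Fin (k+1) → ℝ) × (Fin m → ℝ),
          π z.1 z.2 * ∑ i, (wθ z.1 z.2 i - w z.1 z.2 i) ^ 2
        = ((∫ z : (Fin (k+1) → ℝ) × (Fin m → ℝ), π z.1 z.2 * ∑ i, (wθ z.1 z.2 i) ^ 2)
          - 2 * ∫ z : (Fin (k+1) → ℝ) × (Fin m → ℝ),
              π z.1 z.2 * ∑ i, wθ z.1 z.2 i * w z.1 z.2 i)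
          + ∫ z : (Fin (k+1) → ℝ) × (Fin m → ℝ), π z.1 z.2 * ∑ i, (w z.1 z.2 i) ^ 2 := by
      have h1 : (fun z : (Fin (k+1) → ℝ) × (Fin m → ℝ) =>
          π z.1 z.2 * ∑ i, (wθ z.1 z.2 i - w z.1 z.2 i) ^ 2)
          = fun z => ((π z.1 z.2 * ∑ i, (wθ z.1 z.2 i) ^ 2)
              - 2 * (π z.1 z.2 * ∑ i, wθ z.1 z.2 i * w z.1 z.2 i))
              + π z.1 z.2 * ∑ i, (w z.1 z.2 i) ^ 2 := by
        funext z
        rw [hsq (wθ z.1 z.2) (w z.1 z.2)]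
        ring
      have hA : Integrable (fun z : (Fin (k+1) → ℝ) × (Fin m → ℝ) =>
          (π z.1 z.2 * ∑ i, (wθ z.1 z.2 i) ^ 2)
            - 2 * (π z.1 z.2 * ∑ i, wθ z.1 z.2 i * w z.1 z.2 i)) :=
        hwθ_L2.sub (hcross.const_mul 2)
      rw [h1, integral_add hA hw_L2,
        integral_sub hwθ_L2 (hcross.const_mul 2), integral_const_mul]
    have e2 : ∫ z : (Fin (k+1) → ℝ) × (Fin m → ℝ),
          π z.1 z.2 * ((1 / 2) * ∑ i, (wθ z.1 z.2 i) ^ 2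
            + (∑ i, pd (fun x => wθ x z.2 i) i z.1)
            + ∑ i, pd (fun x => Real.log (ρ x)) i z.1 * wθ z.1 z.2 i)
        = (1/2) * (∫ z : (Fin (k+1) → ℝ) × (Fin m → ℝ),
              π z.1 z.2 * ∑ i, (wθ z.1 z.2 i) ^ 2)
          + ∫ z : (Fin (k+1) → ℝ) × (Fin m → ℝ),
              π z.1 z.2 * ((∑ i, pd (fun x => wθ x z.2 i) i z.1)
                + ∑ i, pd (fun x => Real.log (ρ x)) i z.1 * wθ z.1 z.2 i) := by
      have h1 : (fun z : (Fin (k+1) → ℝ) × (Fin m → ℝ) =>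
          π z.1 z.2 * ((1 / 2) * ∑ i, (wθ z.1 z.2 i) ^ 2
            + (∑ i, pd (fun x => wθ x z.2 i) i z.1)
            + ∑ i, pd (fun x => Real.log (ρ x)) i z.1 * wθ z.1 z.2 i))
          = fun z => (1/2) * (π z.1 z.2 * ∑ i, (wθ z.1 z.2 i) ^ 2)
              + π z.1 z.2 * ((∑ i, pd (fun x => wθ x z.2 i) i z.1)
                + ∑ i, pd (fun x => Real.log (ρ x)) i z.1 * wθ z.1 z.2 i) := by
        funext z; ring
      rw [h1, integral_add (hwθ_L2.const_mul _) himp, integral_const_mul]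
    have e3 : (∫ z : (Fin (k+1) → ℝ) × (Fin m → ℝ),
          π z.1 z.2 * ∑ i, wθ z.1 z.2 i * w z.1 z.2 i)
        + (∫ z : (Fin (k+1) → ℝ) × (Fin m → ℝ),
          π z.1 z.2 * ((∑ i, pd (fun x => wθ x z.2 i) i z.1)
            + ∑ i, pd (fun x => Real.log (ρ x)) i z.1 * wθ z.1 z.2 i)) = 0 := by
      rw [← integral_add hcross himp]
      rw [show (fun z : (Fin (k+1) → ℝ) × (Fin m → ℝ) =>
          (π z.1 z.2 * ∑ i, wθ z.1 z.2 i * w z.1 z.2 i)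
            + π z.1 z.2 * ((∑ i, pd (fun x => wθ x z.2 i) i z.1)
              + ∑ i, pd (fun x => Real.log (ρ x)) i z.1 * wθ z.1 z.2 i))
          = fun z => π z.1 z.2 * (∑ i, wθ z.1 z.2 i * w z.1 z.2 i
            + ∑ i, pd (fun x => wθ x z.2 i) i z.1
            + ∑ i, pd (fun x => Real.log (ρ x)) i z.1 * wθ z.1 z.2 i)
          from funext fun z => by ring]
      exact hkey
    rw [e1, e2]
    linarith [e3]
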